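/- Fix an integer l ≥ 1. There exists M > 0 such that for every ε ∈ [0,1] and every f ∈ C^l([0,1]), max_{0 ≤ j ≤ l−1} sup_{x∈[0,1]} |((L_ε − L₀)f)^{(j)}(x)| ≤ 2 ε M · max_{0 ≤ j ≤ l−1} sup_{x∈[0,1]} |f^{(j)}(x)|. In particular, the operator norm of L_ε − L₀ from (C^l([0,1]), ‖·‖_{C^l}) to (C^{l−1}([0,1]), ‖·‖_{C^{l−1}}) tends to 0 as ε → 0. -/

import Mathlib

open Filter Topology

/-- The Gauss transfer operator `(L₀ f)(x) = Σ_{a ≥ 1} (a+x)⁻² f(1/(a+x))`. -/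
noncomputable def gaussOp (f : ℝ → ℝ) : ℝ → ℝ :=
  fun x => ∑' a : ℕ, (1 / (((a : ℝ) + 1) + x) ^ 2) * f (1 / (((a : ℝ) + 1) + x))

/-- The Rényi transfer operator `(L₁ f)(x) = Σ_{a ≥ 1} (a+x)⁻² f(1 - 1/(a+x))`. -/
noncomputable def renyiOp (f : ℝ → ℝ) : ℝ → ℝ :=
  fun x => ∑' a : ℕ, (1 / (((a : ℝ) + 1) + x) ^ 2) * f (1 - 1 / (((a : ℝ) + 1) + x))

/-- The annealed transfer operator `L_ε f = (1-ε) L₀ f + ε L₁ f` of the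
Gauss–Rényi random map. -/
noncomputable def annealedOp (ε : ℝ) (f : ℝ → ℝ) : ℝ → ℝ :=
  fun x => (1 - ε) * gaussOp f x + ε * renyiOp f x


open Set Asymptotics Polynomial

lemma tail_small {b : ℕ → ℝ} (hb : Summable b) {δ : ℝ} (hδ : 0 < δ) :
    ∃ N : ℕ, ∑' k, b (k + N) < δ := by
  have h := hb.hasSum.tendsto_sum_nat
  have h2 : Tendsto (fun N => ∑' k, b (k + N)) atTop (𝓝 0) := by
    have : (fun N => ∑' k, b (k + N)) = fun N => (∑' n, b n) - ∑ i ∈ Finset.range N, b i := by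
      funext N
      have := hb.sum_add_tsum_nat_add N
      linarith
    rw [this]
    simpa using ((tendsto_const_nhds (x := ∑' n, b n)).sub h)
  exact (h2.eventually_lt_const hδ).exists

lemma tsum_hasDerivWithinAt_icc {u u' : ℕ → ℝ → ℝ} {b : ℕ → ℝ}
    (hb : Summable b)
    (hder : ∀ n, ∀ x ∈ Set.Icc (0:ℝ) 1, HasDerivWithinAt (u n) (u' n x) (Set.Icc (0:ℝ) 1) x)
    (hbd : ∀ n, ∀ x ∈ Set.Icc (0:ℝ) 1, |u' n x| ≤ b n)
    (hsum : ∀ x ∈ Set.Icc (0:ℝ) 1, Summable (fun n => u n x))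
    {x : ℝ} (hx : x ∈ Set.Icc (0:ℝ) 1) :
    HasDerivWithinAt (fun y => ∑' n, u n y) (∑' n, u' n x) (Set.Icc (0:ℝ) 1) x := by
  have hsum' : ∀ z ∈ Set.Icc (0:ℝ) 1, Summable fun n => u' n z := fun z hz =>
    Summable.of_norm_bounded hb (fun n => by simpa [Real.norm_eq_abs] using hbd n z hz)
  rw [hasDerivWithinAt_iff_isLittleO, isLittleO_iff]
  intro c hc
  obtain ⟨N, hN⟩ := tail_small hb (by linarith : (0:ℝ) < c/3)
  have hbshift : Summable fun k => b (k + N) := (summable_nat_add_iff N).mpr hb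
  -- the finite part
  have hG : HasDerivWithinAt (fun y => ∑ n ∈ Finset.range N, u n y)
      (∑ n ∈ Finset.range N, u' n x) (Set.Icc (0:ℝ) 1) x :=
    HasDerivWithinAt.fun_sum (fun n _ => hder n x hx)
  rw [hasDerivWithinAt_iff_isLittleO] at hG
  filter_upwards [isLittleO_iff.mp hG (by linarith : (0:ℝ) < c/3), self_mem_nhdsWithin]
    with y hy1 hy2
  have hxy : ∀ z ∈ Set.Icc (0:ℝ) 1, ∑' n, u n z
      = ∑ n ∈ Finset.range N, u n z + ∑' n, u (n + N) z := fun z hz =>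
    ((hsum z hz).sum_add_tsum_nat_add N).symm
  have hxy' : ∑' n, u' n x
      = ∑ n ∈ Finset.range N, u' n x + ∑' n, u' (n + N) x :=
    ((hsum' x hx).sum_add_tsum_nat_add N).symm
  have hRdiff : ∑' n, u (n + N) y - ∑' n, u (n + N) x
      = ∑' n, (u (n + N) y - u (n + N) x) :=
    (Summable.tsum_sub ((summable_nat_add_iff N).mpr (hsum y hy2))
      ((summable_nat_add_iff N).mpr (hsum x hx))).symm
  have hR : ‖∑' n, (u (n + N) y - u (n + N) x)‖ ≤ (∑' k, b (k + N)) * ‖y - x‖ := by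
    have hs : HasSum (fun k => b (k + N) * ‖y - x‖) ((∑' k, b (k + N)) * ‖y - x‖) :=
      hbshift.hasSum.mul_right _
    refine tsum_of_norm_bounded hs (fun n => ?_)
    exact (convex_Icc (0:ℝ) 1).norm_image_sub_le_of_norm_hasDerivWithin_le
      (hder (n + N)) (fun z hz => by simpa [Real.norm_eq_abs] using hbd (n + N) z hz)
      hx hy2
  have hT : ‖(∑' n, u' (n + N) x)‖ ≤ ∑' k, b (k + N) :=
    tsum_of_norm_bounded hbshift.hasSum (fun n => by
      simpa [Real.norm_eq_abs] using hbd (n + N) x hx)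
  have key : (∑' n, u n y) - (∑' n, u n x) - (y - x) • (∑' n, u' n x)
      = ((∑ n ∈ Finset.range N, u n y) - (∑ n ∈ Finset.range N, u n x)
          - (y - x) • (∑ n ∈ Finset.range N, u' n x))
        + ((∑' n, (u (n + N) y - u (n + N) x)) - (y - x) • (∑' n, u' (n + N) x)) := by
    rw [hxy y hy2, hxy x hx, hxy', ← hRdiff]
    simp [smul_eq_mul]
    ring
  rw [key]
  have e1 : ‖(y - x) • (∑' n, u' (n + N) x)‖ ≤ (∑' k, b (k + N)) * ‖y - x‖ := by
    rw [norm_smul]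
    calc ‖y - x‖ * ‖∑' n, u' (n + N) x‖ ≤ ‖y - x‖ * ∑' k, b (k + N) := by
          exact mul_le_mul_of_nonneg_left hT (norm_nonneg _)
      _ = (∑' k, b (k + N)) * ‖y - x‖ := by ring
  calc ‖_ + _‖ ≤ ‖(∑ n ∈ Finset.range N, u n y) - (∑ n ∈ Finset.range N, u n x)
          - (y - x) • (∑ n ∈ Finset.range N, u' n x)‖
        + ‖(∑' n, (u (n + N) y - u (n + N) x)) - (y - x) • (∑' n, u' (n + N) x)‖ :=
        norm_add_le _ _
    _ ≤ c/3 * ‖y - x‖ + ((∑' k, b (k + N)) * ‖y - x‖ + (∑' k, b (k + N)) * ‖y - x‖) := by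
        refine add_le_add hy1 ((norm_sub_le _ _).trans (add_le_add hR e1))
    _ ≤ c * ‖y - x‖ := by nlinarith [norm_nonneg (y - x), hN]

lemma iteratedDerivWithin_tsum_icc {u : ℕ → ℝ → ℝ} {l : ℕ}
    (hu : ∀ a, ContDiffOn ℝ l (u a) (Set.Icc (0:ℝ) 1))
    {m : ℕ} (hm : m < l) {v : ℕ → ℕ → ℝ}
    (hv : ∀ j, j ≤ m → Summable (v j))
    (hbd : ∀ j, j ≤ m → ∀ a, ∀ x ∈ Set.Icc (0:ℝ) 1,
      |iteratedDerivWithin j (u a) (Set.Icc (0:ℝ) 1) x| ≤ v j a) :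
    ∀ j, j ≤ m → ∀ x ∈ Set.Icc (0:ℝ) 1,
      iteratedDerivWithin j (fun y => ∑' a, u a y) (Set.Icc (0:ℝ) 1) x
        = ∑' a, iteratedDerivWithin j (u a) (Set.Icc (0:ℝ) 1) x := by
  have hUD : UniqueDiffOn ℝ (Set.Icc (0:ℝ) 1) := uniqueDiffOn_Icc zero_lt_one
  intro j
  induction j with
  | zero => intro _ x hx; simp
  | succ j IH =>
    intro hj x hx
    have hj' : j ≤ m := Nat.le_of_succ_le hj
    have hsum : ∀ z ∈ Set.Icc (0:ℝ) 1,
        Summable fun a => iteratedDerivWithin j (u a) (Set.Icc (0:ℝ) 1) z := fun z hz =>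
      Summable.of_norm_bounded (hv j hj')
        (fun a => by simpa [Real.norm_eq_abs] using hbd j hj' a z hz)
    have hder : ∀ a, ∀ z ∈ Set.Icc (0:ℝ) 1,
        HasDerivWithinAt (iteratedDerivWithin j (u a) (Set.Icc (0:ℝ) 1))
          (iteratedDerivWithin (j+1) (u a) (Set.Icc (0:ℝ) 1) z) (Set.Icc (0:ℝ) 1) z := by
      intro a z hz
      have hlt : (j : WithTop ℕ∞) < (l : WithTop ℕ∞) := by
        exact_mod_cast Nat.lt_of_lt_of_le (Nat.lt_of_le_of_lt hj' hm) le_rfl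
      have hdw := ((hu a).differentiableOn_iteratedDerivWithin hlt hUD) z hz
      have h1 := hdw.hasDerivWithinAt
      rwa [← iteratedDerivWithin_succ] at h1
    have hD := tsum_hasDerivWithinAt_icc (hv (j+1) hj) hder
      (fun a z hz => hbd (j+1) hj a z hz) hsum hx
    rw [iteratedDerivWithin_succ]
    rw [derivWithin_congr (fun z hz => IH hj' z hz) (IH hj' x hx)]
    exact hD.derivWithin (hUD x hx)

lemma hasDerivAt_tfun (a : ℕ) {x : ℝ} (hx : x ∈ Set.Icc (0:ℝ) 1) :
    HasDerivAt (fun y => 1 / (((a:ℝ)+1) + y)) (-(1 / (((a:ℝ)+1) + x))^2) x := by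
  have h0 : ((a:ℝ)+1) + x ≠ 0 := by
    have : (0:ℝ) ≤ (a:ℝ) := Nat.cast_nonneg a
    nlinarith [hx.1]
  have h1 : HasDerivAt (fun y : ℝ => ((a:ℝ)+1) + y) 1 x := (hasDerivAt_id x).const_add _
  have h2 := h1.inv h0
  have hfun : (fun y : ℝ => 1 / (((a:ℝ)+1) + y)) = fun y => (((a:ℝ)+1) + y)⁻¹ := by
    funext y; rw [one_div]
  rw [hfun]
  refine h2.congr_deriv ?_
  rw [div_pow, one_pow, neg_div]

lemma rep_lemma (l : ℕ) (c d : ℝ)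
    (hm : ∀ (a : ℕ), ∀ x ∈ Set.Icc (0:ℝ) 1,
      c + d * (1 / (((a:ℝ)+1) + x)) ∈ Set.Icc (0:ℝ) 1) :
    ∀ j, j < l → ∃ q : ℕ → Polynomial ℝ, (∀ k, j < k → q k = 0) ∧
    ∀ f : ℝ → ℝ, ContDiffOn ℝ l f (Set.Icc (0:ℝ) 1) → ∀ a : ℕ, ∀ x ∈ Set.Icc (0:ℝ) 1,
      iteratedDerivWithin j
          (fun y => 1 / (((a:ℝ)+1) + y) ^ 2 * f (c + d * (1 / (((a:ℝ)+1) + y))))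
          (Set.Icc (0:ℝ) 1) x
      = ∑ k ∈ Finset.range (j+1),
          (Polynomial.X^2 * q k).eval (1 / (((a:ℝ)+1) + x))
            * iteratedDerivWithin k f (Set.Icc (0:ℝ) 1)
                (c + d * (1 / (((a:ℝ)+1) + x))) := by
  have hUD : UniqueDiffOn ℝ (Set.Icc (0:ℝ) 1) := uniqueDiffOn_Icc zero_lt_one
  intro j
  induction j with
  | zero =>
    intro _
    refine ⟨fun k => if k = 0 then 1 else 0, fun k hk => if_neg (by omega), ?_⟩
    intro f hf a x hx
    rw [Finset.sum_range_one]
    simp [iteratedDerivWithin_zero, div_pow]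
  | succ j IH =>
    intro hj
    obtain ⟨q, hq0, hq⟩ := IH (Nat.lt_of_succ_lt hj)
    set Q : ℕ → Polynomial ℝ := fun k => Polynomial.X^2 * q k with hQ
    refine ⟨fun m => -(Polynomial.derivative (Q m))
      + (if m = 0 then 0 else (-d) • (Q (m-1))), ?_, ?_⟩
    · intro k hk
      have h1 : q k = 0 := hq0 k (Nat.lt_of_succ_lt hk)
      have h2 : k ≠ 0 := by omega
      have h3 : q (k-1) = 0 := hq0 (k-1) (by omega)
      simp [hQ, h1, h2, h3]
    intro f hf a x hx
    have hτx : c + d * (1 / (((a:ℝ)+1) + x)) ∈ Set.Icc (0:ℝ) 1 := hm a x hx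
    have ht' : HasDerivAt (fun y => 1 / (((a:ℝ)+1) + y))
        (-(1 / (((a:ℝ)+1) + x))^2) x := hasDerivAt_tfun a hx
    have hterm : ∀ k, k < j + 1 →
        HasDerivWithinAt
          (fun y => (Q k).eval (1 / (((a:ℝ)+1) + y))
            * iteratedDerivWithin k f (Set.Icc (0:ℝ) 1) (c + d * (1 / (((a:ℝ)+1) + y))))
          ((Q k).derivative.eval (1 / (((a:ℝ)+1) + x)) * (-(1 / (((a:ℝ)+1) + x))^2)
              * iteratedDerivWithin k f (Set.Icc (0:ℝ) 1) (c + d * (1 / (((a:ℝ)+1) + x)))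
            + (Q k).eval (1 / (((a:ℝ)+1) + x))
              * (iteratedDerivWithin (k+1) f (Set.Icc (0:ℝ) 1)
                  (c + d * (1 / (((a:ℝ)+1) + x))) * (d * -(1 / (((a:ℝ)+1) + x))^2)))
          (Set.Icc (0:ℝ) 1) x := by
      intro k hk
      have h1 : HasDerivAt (fun y => (Q k).eval (1 / (((a:ℝ)+1) + y)))
          ((Q k).derivative.eval (1 / (((a:ℝ)+1) + x)) * (-(1 / (((a:ℝ)+1) + x))^2)) x := by
        have := HasDerivAt.comp x
          (Polynomial.hasDerivAt (Q k) (1 / (((a:ℝ)+1) + x))) ht'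
        simpa [Function.comp_def] using this
      have houter : HasDerivWithinAt (iteratedDerivWithin k f (Set.Icc (0:ℝ) 1))
          (iteratedDerivWithin (k+1) f (Set.Icc (0:ℝ) 1) (c + d * (1 / (((a:ℝ)+1) + x))))
          (Set.Icc (0:ℝ) 1) (c + d * (1 / (((a:ℝ)+1) + x))) := by
        have hlt : (k : WithTop ℕ∞) < (l : WithTop ℕ∞) := by
          exact_mod_cast (by omega : k < l)
        have hdw := (hf.differentiableOn_iteratedDerivWithin hlt hUD) _ hτx
        have h2 := hdw.hasDerivWithinAt
        rwa [← iteratedDerivWithin_succ] at h2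
      have hτ' : HasDerivAt (fun y => c + d * (1 / (((a:ℝ)+1) + y)))
          (d * -(1 / (((a:ℝ)+1) + x))^2) x := (ht'.const_mul d).const_add c
      have h2 : HasDerivWithinAt
          (fun y => iteratedDerivWithin k f (Set.Icc (0:ℝ) 1)
            (c + d * (1 / (((a:ℝ)+1) + y))))
          (iteratedDerivWithin (k+1) f (Set.Icc (0:ℝ) 1)
            (c + d * (1 / (((a:ℝ)+1) + x))) * (d * -(1 / (((a:ℝ)+1) + x))^2))
          (Set.Icc (0:ℝ) 1) x :=
        by have := HasDerivWithinAt.comp x houter hτ'.hasDerivWithinAt (fun y hy => hm a y hy)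
           exact this
      exact (h1.hasDerivWithinAt).mul h2
    have hsum : HasDerivWithinAt
        (fun y => ∑ k ∈ Finset.range (j+1), (Q k).eval (1 / (((a:ℝ)+1) + y))
            * iteratedDerivWithin k f (Set.Icc (0:ℝ) 1) (c + d * (1 / (((a:ℝ)+1) + y))))
        (∑ k ∈ Finset.range (j+1),
          ((Q k).derivative.eval (1 / (((a:ℝ)+1) + x)) * (-(1 / (((a:ℝ)+1) + x))^2)
              * iteratedDerivWithin k f (Set.Icc (0:ℝ) 1) (c + d * (1 / (((a:ℝ)+1) + x)))
            + (Q k).eval (1 / (((a:ℝ)+1) + x))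
              * (iteratedDerivWithin (k+1) f (Set.Icc (0:ℝ) 1)
                  (c + d * (1 / (((a:ℝ)+1) + x))) * (d * -(1 / (((a:ℝ)+1) + x))^2))))
        (Set.Icc (0:ℝ) 1) x :=
      HasDerivWithinAt.fun_sum (fun k hk => hterm k (Finset.mem_range.mp hk))
    have step1 : iteratedDerivWithin (j+1)
        (fun y => 1 / (((a:ℝ)+1) + y) ^ 2 * f (c + d * (1 / (((a:ℝ)+1) + y))))
        (Set.Icc (0:ℝ) 1) x
        = derivWithin
            (fun y => ∑ k ∈ Finset.range (j+1), (Q k).eval (1 / (((a:ℝ)+1) + y))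
              * iteratedDerivWithin k f (Set.Icc (0:ℝ) 1) (c + d * (1 / (((a:ℝ)+1) + y))))
            (Set.Icc (0:ℝ) 1) x := by
      rw [iteratedDerivWithin_succ]
      exact derivWithin_congr (fun z hz => hq f hf a z hz) (hq f hf a x hx)
    rw [step1, hsum.derivWithin (hUD x hx)]
    have hQj : Q (j+1) = 0 := by
      simp [hQ, hq0 (j+1) (Nat.lt_succ_self j)]
    -- abstract algebraic regrouping
    have halg : ∀ (T : ℝ) (G : ℕ → ℝ),
        (∑ m ∈ Finset.range (j+1+1),
            (Polynomial.X^2 * (-(Polynomial.derivative (Q m))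
              + (if m = 0 then 0 else (-d) • (Q (m-1))))).eval T * G m)
        = ∑ k ∈ Finset.range (j+1),
          ((Q k).derivative.eval T * (-T^2) * G k
            + (Q k).eval T * (G (k+1) * (d * -T^2))) := by
      intro T G
      have hsplit : ∀ m, (Polynomial.X^2 * (-(Polynomial.derivative (Q m))
            + (if m = 0 then 0 else (-d) • (Q (m-1))))).eval T * G m
          = (Polynomial.X^2 * (-(Polynomial.derivative (Q m)))).eval T * G m
            + (Polynomial.X^2 * (if m = 0 then 0 else (-d) • (Q (m-1)))).eval T * G m := by
        intro m; rw [mul_add, Polynomial.eval_add, add_mul]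
      rw [Finset.sum_congr rfl (fun m _ => hsplit m), Finset.sum_add_distrib,
        Finset.sum_range_succ (n := j+1), Finset.sum_range_succ' (n := j+1)]
      rw [hQj]
      simp only [Polynomial.derivative_zero, neg_zero, mul_zero, Polynomial.eval_zero,
        zero_mul, add_zero, if_pos rfl, Nat.add_sub_cancel, if_neg (Nat.succ_ne_zero _),
        eq_self_iff_true, if_true, mul_zero]
      rw [← Finset.sum_add_distrib]
      refine Finset.sum_congr rfl (fun k hk => ?_)
      simp only [Polynomial.eval_mul, Polynomial.eval_neg, Polynomial.eval_smul,
        Polynomial.eval_pow, Polynomial.eval_X, smul_eq_mul]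
      ring
    exact (halg (1 / (((a:ℝ)+1) + x))
      (fun m => iteratedDerivWithin m f (Set.Icc (0:ℝ) 1)
        (c + d * (1 / (((a:ℝ)+1) + x))))).symm

lemma poly_bound (p : Polynomial ℝ) :
    ∃ B : ℝ, 0 ≤ B ∧ ∀ t ∈ Set.Icc (0:ℝ) 1, |p.eval t| ≤ B := by
  obtain ⟨C, hC⟩ := isCompact_Icc.exists_bound_of_continuousOn
    ((p.continuous_aeval).continuousOn : ContinuousOn (fun t : ℝ => p.eval t) (Set.Icc 0 1))
  exact ⟨max C 0, le_max_right _ _, fun t ht =>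
    le_trans (by simpa [Real.norm_eq_abs] using hC t ht) (le_max_left _ _)⟩

lemma rep_bound (l : ℕ) (c d : ℝ)
    (hm : ∀ (a : ℕ), ∀ x ∈ Set.Icc (0:ℝ) 1,
      c + d * (1 / (((a:ℝ)+1) + x)) ∈ Set.Icc (0:ℝ) 1) {j : ℕ} (hj : j < l) :
    ∃ C : ℝ, 0 ≤ C ∧ ∀ f : ℝ → ℝ, ContDiffOn ℝ l f (Set.Icc (0:ℝ) 1) → ∀ K : ℝ,
      (∀ k, k < l → ∀ z ∈ Set.Icc (0:ℝ) 1, |iteratedDerivWithin k f (Set.Icc (0:ℝ) 1) z| ≤ K) →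
      ∀ a : ℕ, ∀ x ∈ Set.Icc (0:ℝ) 1,
        |iteratedDerivWithin j
            (fun y => 1 / (((a:ℝ)+1) + y) ^ 2 * f (c + d * (1 / (((a:ℝ)+1) + y))))
            (Set.Icc (0:ℝ) 1) x|
          ≤ C * (1 / ((a:ℝ)+1)^2) * K := by
  obtain ⟨q, hq0, hq⟩ := rep_lemma l c d hm j hj
  choose B hB0 hB1 using fun k => poly_bound (q k)
  refine ⟨∑ k ∈ Finset.range (j+1), B k, Finset.sum_nonneg (fun k _ => hB0 k), ?_⟩
  intro f hf K hK a x hx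
  have hl0 : 0 < l := by omega
  have hK0 : 0 ≤ K := le_trans (abs_nonneg _) (hK 0 hl0 x hx)
  have hA0 : (0:ℝ) < (a:ℝ) + 1 := by positivity
  have hAx : (1:ℝ) ≤ ((a:ℝ)+1) + x := by
    have : (0:ℝ) ≤ (a:ℝ) := Nat.cast_nonneg a
    nlinarith [hx.1]
  have ht0 : (0:ℝ) ≤ 1 / (((a:ℝ)+1) + x) := by positivity
  have ht1 : 1 / (((a:ℝ)+1) + x) ≤ 1 := by
    rw [div_le_one (by linarith)]; linarith
  have htA : 1 / (((a:ℝ)+1) + x) ≤ 1 / ((a:ℝ)+1) := by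
    apply one_div_le_one_div_of_le hA0; linarith [hx.1]
  have htmem : 1 / (((a:ℝ)+1) + x) ∈ Set.Icc (0:ℝ) 1 := ⟨ht0, ht1⟩
  rw [hq f hf a x hx]
  calc |∑ k ∈ Finset.range (j+1),
          (Polynomial.X^2 * q k).eval (1 / (((a:ℝ)+1) + x))
            * iteratedDerivWithin k f (Set.Icc (0:ℝ) 1) (c + d * (1 / (((a:ℝ)+1) + x)))|
      ≤ ∑ k ∈ Finset.range (j+1),
          |(Polynomial.X^2 * q k).eval (1 / (((a:ℝ)+1) + x))
            * iteratedDerivWithin k f (Set.Icc (0:ℝ) 1) (c + d * (1 / (((a:ℝ)+1) + x)))| :=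
        Finset.abs_sum_le_sum_abs _ _
    _ ≤ ∑ k ∈ Finset.range (j+1), B k * (1 / ((a:ℝ)+1)^2) * K := by
        refine Finset.sum_le_sum (fun k hk => ?_)
        have hk' : k < l := by
          have := Finset.mem_range.mp hk; omega
        rw [abs_mul, Polynomial.eval_mul, Polynomial.eval_pow, Polynomial.eval_X, abs_mul,
          abs_pow, abs_of_nonneg ht0]
        have h1 : (1 / (((a:ℝ)+1) + x))^2 ≤ (1 / ((a:ℝ)+1))^2 := by
          apply pow_le_pow_left₀ ht0 htA 2
        have h2 : |Polynomial.eval (1 / (((a:ℝ)+1) + x)) (q k)| ≤ B k :=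
          hB1 k _ htmem
        have h3 : |iteratedDerivWithin k f (Set.Icc (0:ℝ) 1)
            (c + d * (1 / (((a:ℝ)+1) + x)))| ≤ K := hK k hk' _ (hm a x hx)
        have h4 : (0:ℝ) ≤ (1 / (((a:ℝ)+1) + x))^2 := by positivity
        calc (1 / (((a:ℝ)+1) + x))^2 * |Polynomial.eval (1 / (((a:ℝ)+1) + x)) (q k)|
              * |iteratedDerivWithin k f (Set.Icc (0:ℝ) 1) (c + d * (1 / (((a:ℝ)+1) + x)))|
            ≤ (1 / ((a:ℝ)+1))^2 * B k * K := by
              have h5 : (0:ℝ) ≤ (1 / ((a:ℝ)+1))^2 := by positivity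
              have h6 : (0:ℝ) ≤ (1 / ((a:ℝ)+1))^2 * B k :=
                mul_nonneg h5 (hB0 k)
              exact mul_le_mul (mul_le_mul h1 h2 (abs_nonneg _) h5) h3 (abs_nonneg _) h6
          _ = B k * (1 / ((a:ℝ)+1)^2) * K := by rw [div_pow, one_pow]; ring
    _ = (∑ k ∈ Finset.range (j+1), B k) * (1 / ((a:ℝ)+1)^2) * K := by
        rw [← Finset.sum_mul, ← Finset.sum_mul]

lemma hAx_pos (a : ℕ) {x : ℝ} (hx : x ∈ Set.Icc (0:ℝ) 1) : (1:ℝ) ≤ ((a:ℝ)+1) + x := by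
  have : (0:ℝ) ≤ (a:ℝ) := Nat.cast_nonneg a
  nlinarith [hx.1]

lemma tmem (a : ℕ) {x : ℝ} (hx : x ∈ Set.Icc (0:ℝ) 1) :
    1 / (((a:ℝ)+1) + x) ∈ Set.Icc (0:ℝ) 1 := by
  have h1 := hAx_pos a hx
  constructor
  · positivity
  · rw [div_le_one (by linarith)]; linarith

lemma hm_gauss : ∀ (a : ℕ), ∀ x ∈ Set.Icc (0:ℝ) 1,
    (0:ℝ) + 1 * (1 / (((a:ℝ)+1) + x)) ∈ Set.Icc (0:ℝ) 1 := by
  intro a x hx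
  simpa using tmem a hx

lemma hm_renyi : ∀ (a : ℕ), ∀ x ∈ Set.Icc (0:ℝ) 1,
    (1:ℝ) + (-1) * (1 / (((a:ℝ)+1) + x)) ∈ Set.Icc (0:ℝ) 1 := by
  intro a x hx
  obtain ⟨h0, h1⟩ := tmem a hx
  constructor <;> [linarith; linarith]

lemma contDiffOn_term (l : ℕ) (c d : ℝ)
    (hm : ∀ (a : ℕ), ∀ x ∈ Set.Icc (0:ℝ) 1,
      c + d * (1 / (((a:ℝ)+1) + x)) ∈ Set.Icc (0:ℝ) 1)
    {f : ℝ → ℝ} (hf : ContDiffOn ℝ l f (Set.Icc (0:ℝ) 1)) (a : ℕ) :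
    ContDiffOn ℝ l (fun y => 1 / (((a:ℝ)+1) + y) ^ 2 * f (c + d * (1 / (((a:ℝ)+1) + y))))
      (Set.Icc (0:ℝ) 1) := by
  have hne : ∀ y ∈ Set.Icc (0:ℝ) 1, (((a:ℝ)+1) + y) ≠ 0 := fun y hy => by
    have := hAx_pos a hy; linarith
  have hden : ContDiffOn ℝ l (fun y : ℝ => (((a:ℝ)+1) + y)) (Set.Icc (0:ℝ) 1) :=
    (contDiffOn_const.add contDiffOn_id)
  have h1 : ContDiffOn ℝ l (fun y => 1 / (((a:ℝ)+1) + y) ^ 2) (Set.Icc (0:ℝ) 1) :=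
    contDiffOn_const.div (hden.pow 2) (fun y hy => pow_ne_zero 2 (hne y hy))
  have h2 : ContDiffOn ℝ l (fun y => c + d * (1 / (((a:ℝ)+1) + y))) (Set.Icc (0:ℝ) 1) :=
    contDiffOn_const.add (contDiffOn_const.mul (contDiffOn_const.div hden hne))
  have h3 : ContDiffOn ℝ l (fun y => f (c + d * (1 / (((a:ℝ)+1) + y)))) (Set.Icc (0:ℝ) 1) :=
    ContDiffOn.comp hf h2 (fun y hy => hm a y hy)
  exact h1.mul h3

lemma summable_inv_sq : Summable (fun a : ℕ => 1 / ((a:ℝ)+1)^2) := by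
  have h1 : Summable (fun n : ℕ => 1 / (n:ℝ)^2) := Real.summable_one_div_nat_pow.mpr one_lt_two
  have h2 := (summable_nat_add_iff 1).mpr h1
  exact h2.congr (fun n => by push_cast; ring)

lemma K_bound {l : ℕ} (hl : 1 ≤ l) {f : ℝ → ℝ} (hf : ContDiffOn ℝ l f (Set.Icc (0:ℝ) 1)) :
    (0 ≤ ⨆ j : Fin l, ⨆ x : Set.Icc (0:ℝ) 1, |iteratedDerivWithin j f (Set.Icc (0:ℝ) 1) x|)
    ∧ ∀ k, k < l → ∀ z ∈ Set.Icc (0:ℝ) 1, |iteratedDerivWithin k f (Set.Icc (0:ℝ) 1) z|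
        ≤ ⨆ j : Fin l, ⨆ x : Set.Icc (0:ℝ) 1, |iteratedDerivWithin j f (Set.Icc (0:ℝ) 1) x| := by
  have hUD : UniqueDiffOn ℝ (Set.Icc (0:ℝ) 1) := uniqueDiffOn_Icc zero_lt_one
  haveI : Nonempty (Set.Icc (0:ℝ) 1) := ⟨⟨0, by norm_num⟩⟩
  have hbdd : ∀ j : Fin l, BddAbove (Set.range fun x : Set.Icc (0:ℝ) 1 =>
      |iteratedDerivWithin (j:ℕ) f (Set.Icc (0:ℝ) 1) x|) := by
    intro j
    obtain ⟨C, hC⟩ := isCompact_Icc.exists_bound_of_continuousOn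
      (hf.continuousOn_iteratedDerivWithin
        (by exact_mod_cast (j.2.le : (j:ℕ) ≤ l)) hUD)
    refine ⟨C, ?_⟩
    rintro _ ⟨x, rfl⟩
    simpa [Real.norm_eq_abs] using hC x x.2
  have houterb : BddAbove (Set.range fun j : Fin l =>
      ⨆ x : Set.Icc (0:ℝ) 1, |iteratedDerivWithin (j:ℕ) f (Set.Icc (0:ℝ) 1) x|) :=
    (Set.finite_range _).bddAbove
  constructor
  · exact Real.iSup_nonneg fun j => Real.iSup_nonneg fun x => abs_nonneg _
  · intro k hk z hz
    have h1 : |iteratedDerivWithin k f (Set.Icc (0:ℝ) 1) z|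
        ≤ ⨆ x : Set.Icc (0:ℝ) 1, |iteratedDerivWithin ((⟨k, hk⟩ : Fin l) : ℕ) f (Set.Icc (0:ℝ) 1) x| :=
      le_ciSup (hbdd ⟨k, hk⟩) ⟨z, hz⟩
    exact h1.trans (le_ciSup houterb (⟨k, hk⟩ : Fin l))

lemma main_est (l : ℕ) (hl : 1 ≤ l) :
    ∃ M : ℝ, 0 < M ∧ ∀ ε ∈ Set.Icc (0:ℝ) 1, ∀ f : ℝ → ℝ,
      ContDiffOn ℝ l f (Set.Icc (0:ℝ) 1) →
      ∀ j, j < l → ∀ x ∈ Set.Icc (0:ℝ) 1,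
        |iteratedDerivWithin j (fun y => annealedOp ε f y - gaussOp f y) (Set.Icc (0:ℝ) 1) x|
          ≤ 2 * ε * M * (⨆ j : Fin l, ⨆ x : Set.Icc (0:ℝ) 1,
              |iteratedDerivWithin j f (Set.Icc (0:ℝ) 1) x|) := by
  have hUD : UniqueDiffOn ℝ (Set.Icc (0:ℝ) 1) := uniqueDiffOn_Icc zero_lt_one
  choose Cg hCg0 hCg using fun j : Fin l => rep_bound l 0 1 hm_gauss j.2
  choose Cr hCr0 hCr using fun j : Fin l => rep_bound l 1 (-1) hm_renyi j.2
  set T : ℝ := ∑' a : ℕ, 1 / ((a:ℝ)+1)^2 with hT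
  have hT0 : 0 ≤ T := tsum_nonneg (fun a => by positivity)
  refine ⟨1 + ∑ j : Fin l, (Cg j + Cr j) * T, by
    have : 0 ≤ ∑ j : Fin l, (Cg j + Cr j) * T :=
      Finset.sum_nonneg (fun j _ => mul_nonneg (by linarith [hCg0 j, hCr0 j]) hT0)
    linarith, ?_⟩
  set M : ℝ := 1 + ∑ j : Fin l, (Cg j + Cr j) * T with hM
  have hMpos : 0 < M := by
    have : 0 ≤ ∑ j : Fin l, (Cg j + Cr j) * T :=
      Finset.sum_nonneg (fun j _ => mul_nonneg (by linarith [hCg0 j, hCr0 j]) hT0)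
    rw [hM]; linarith
  intro ε hε f hf j hj x hx
  set K : ℝ := ⨆ j : Fin l, ⨆ x : Set.Icc (0:ℝ) 1,
    |iteratedDerivWithin j f (Set.Icc (0:ℝ) 1) x| with hKdef
  obtain ⟨hK0, hKb⟩ := K_bound hl hf
  -- the two families of terms
  set hga : ℕ → ℝ → ℝ := fun a y =>
    1 / (((a:ℝ)+1) + y) ^ 2 * f ((0:ℝ) + 1 * (1 / (((a:ℝ)+1) + y))) with hga_def
  set hra : ℕ → ℝ → ℝ := fun a y =>
    1 / (((a:ℝ)+1) + y) ^ 2 * f ((1:ℝ) + (-1) * (1 / (((a:ℝ)+1) + y))) with hra_def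
  have hg_smooth : ∀ a, ContDiffOn ℝ l (hga a) (Set.Icc (0:ℝ) 1) :=
    fun a => contDiffOn_term l 0 1 hm_gauss hf a
  have hr_smooth : ∀ a, ContDiffOn ℝ l (hra a) (Set.Icc (0:ℝ) 1) :=
    fun a => contDiffOn_term l 1 (-1) hm_renyi hf a
  set w : ℕ → ℝ → ℝ := fun a y => ε * (hra a y - hga a y) with hw_def
  have hw_smooth : ∀ a, ContDiffOn ℝ l (w a) (Set.Icc (0:ℝ) 1) :=
    fun a => contDiffOn_const.mul ((hr_smooth a).sub (hg_smooth a))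
  -- bounds on iterated derivatives of w a
  have hwbd : ∀ j' (hj' : j' < l), ∀ a, ∀ z ∈ Set.Icc (0:ℝ) 1,
      |iteratedDerivWithin j' (w a) (Set.Icc (0:ℝ) 1) z|
        ≤ ε * ((Cg ⟨j', hj'⟩ + Cr ⟨j', hj'⟩) * (1 / ((a:ℝ)+1)^2) * K) := by
    intro j' hj' a z hz
    have hsmooth_j : ContDiffOn ℝ j' (fun y => hra a y - hga a y) (Set.Icc (0:ℝ) 1) :=
      ((hr_smooth a).sub (hg_smooth a)).of_le (by exact_mod_cast Nat.le_of_lt hj')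
    have e1 : iteratedDerivWithin j' (w a) (Set.Icc (0:ℝ) 1) z
        = ε * iteratedDerivWithin j' (fun y => hra a y - hga a y) (Set.Icc (0:ℝ) 1) z := by
      rw [hw_def]
      exact iteratedDerivWithin_const_mul hz hUD ε (hsmooth_j z hz)
    have e2 : iteratedDerivWithin j' (fun y => hra a y - hga a y) (Set.Icc (0:ℝ) 1) z
        = iteratedDerivWithin j' (hra a) (Set.Icc (0:ℝ) 1) z
          - iteratedDerivWithin j' (hga a) (Set.Icc (0:ℝ) 1) z := by
      have := iteratedDerivWithin_sub hz hUD
        ((hr_smooth a).of_le (by exact_mod_cast Nat.le_of_lt hj' : (j' : WithTop ℕ∞) ≤ l) z hz)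
        ((hg_smooth a).of_le (by exact_mod_cast Nat.le_of_lt hj' : (j' : WithTop ℕ∞) ≤ l) z hz)
      exact this
    rw [e1, e2, abs_mul, abs_of_nonneg hε.1]
    have hbr := hCr ⟨j', hj'⟩ f hf K hKb a z hz
    have hbg := hCg ⟨j', hj'⟩ f hf K hKb a z hz
    have hstep : |iteratedDerivWithin j' (hra a) (Set.Icc (0:ℝ) 1) z
        - iteratedDerivWithin j' (hga a) (Set.Icc (0:ℝ) 1) z|
        ≤ (Cg ⟨j', hj'⟩ + Cr ⟨j', hj'⟩) * (1 / ((a:ℝ)+1)^2) * K := by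
      refine le_trans (abs_sub _ _) ?_
      calc |iteratedDerivWithin j' (hra a) (Set.Icc (0:ℝ) 1) z|
            + |iteratedDerivWithin j' (hga a) (Set.Icc (0:ℝ) 1) z|
          ≤ Cr ⟨j', hj'⟩ * (1 / ((a:ℝ)+1)^2) * K
            + Cg ⟨j', hj'⟩ * (1 / ((a:ℝ)+1)^2) * K := add_le_add hbr hbg
        _ = (Cg ⟨j', hj'⟩ + Cr ⟨j', hj'⟩) * (1 / ((a:ℝ)+1)^2) * K := by ring
    exact mul_le_mul_of_nonneg_left hstep hε.1
  rw [← hKdef] at hK0 hKb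
  -- summability of each term's values
  have hterm_bound : ∀ (cc dd : ℝ),
      (∀ (a : ℕ), ∀ y ∈ Set.Icc (0:ℝ) 1,
        cc + dd * (1 / (((a:ℝ)+1) + y)) ∈ Set.Icc (0:ℝ) 1) →
      ∀ y ∈ Set.Icc (0:ℝ) 1, ∀ a : ℕ,
        ‖1 / (((a:ℝ)+1) + y) ^ 2 * f (cc + dd * (1 / (((a:ℝ)+1) + y)))‖
          ≤ 1 / ((a:ℝ)+1)^2 * K := by
    intro cc dd hmm y hy a
    rw [Real.norm_eq_abs, abs_mul]
    have h1 : |1 / (((a:ℝ)+1) + y) ^ 2| ≤ 1 / ((a:ℝ)+1)^2 := by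
      rw [abs_of_nonneg (div_nonneg zero_le_one (sq_nonneg _))]
      exact one_div_le_one_div_of_le (by positivity)
        (pow_le_pow_left₀ (by positivity) (by linarith [hy.1]) 2)
    have h2 : |f (cc + dd * (1 / (((a:ℝ)+1) + y)))| ≤ K := by
      simpa using hKb 0 (by omega) _ (hmm a y hy)
    exact mul_le_mul h1 h2 (abs_nonneg _) (by positivity)
  have hwsum : ∀ y ∈ Set.Icc (0:ℝ) 1, Summable (fun a => hga a y)
      ∧ Summable (fun a => hra a y) := by
    intro y hy
    constructor
    · exact Summable.of_norm_bounded
        (summable_inv_sq.mul_right K) (fun a => hterm_bound 0 1 hm_gauss y hy a)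
    · exact Summable.of_norm_bounded
        (summable_inv_sq.mul_right K) (fun a => hterm_bound 1 (-1) hm_renyi y hy a)
  -- G agrees with the series on Icc
  have hEq : Set.EqOn (fun y => annealedOp ε f y - gaussOp f y)
      (fun y => ∑' a, w a y) (Set.Icc (0:ℝ) 1) := by
    intro y hy
    obtain ⟨hsg, hsr⟩ := hwsum y hy
    have h1 : annealedOp ε f y - gaussOp f y = ε * (renyiOp f y - gaussOp f y) := by
      simp only [annealedOp]; ring
    have h2 : renyiOp f y = ∑' a, hra a y := by
      refine tsum_congr (fun a => ?_)
      rw [hra_def]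
      simp only
      rw [show (1:ℝ) + (-1) * (1 / (((a:ℝ)+1) + y)) = 1 - 1 / (((a:ℝ)+1) + y) by ring]
    have h3 : gaussOp f y = ∑' a, hga a y := by
      refine tsum_congr (fun a => ?_)
      rw [hga_def]
      simp only
      rw [zero_add, one_mul]
    simp only
    rw [h1, h2, h3, ← Summable.tsum_sub hsr hsg, ← tsum_mul_left]
  -- term-by-term differentiation of the series
  set v : ℕ → ℕ → ℝ := fun j'' a => if h : j'' < l then
    ε * ((Cg ⟨j'', h⟩ + Cr ⟨j'', h⟩) * (1 / ((a:ℝ)+1)^2) * K) else 0 with hv_def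
  have hv : ∀ j'', j'' ≤ j → Summable (v j'') := by
    intro j'' hj''
    have hlt : j'' < l := by omega
    simp only [hv_def, dif_pos hlt]
    exact (((summable_inv_sq.mul_left (Cg ⟨j'', hlt⟩ + Cr ⟨j'', hlt⟩)).mul_right K).mul_left ε)
  have hbd : ∀ j'', j'' ≤ j → ∀ a, ∀ z ∈ Set.Icc (0:ℝ) 1,
      |iteratedDerivWithin j'' (w a) (Set.Icc (0:ℝ) 1) z| ≤ v j'' a := by
    intro j'' hj'' a z hz
    have hlt : j'' < l := by omega
    simp only [hv_def, dif_pos hlt]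
    exact hwbd j'' hlt a z hz
  have h1 : iteratedDerivWithin j (fun y => annealedOp ε f y - gaussOp f y)
      (Set.Icc (0:ℝ) 1) x
      = iteratedDerivWithin j (fun y => ∑' a, w a y) (Set.Icc (0:ℝ) 1) x :=
    iteratedDerivWithin_congr hEq hx
  have h2 := iteratedDerivWithin_tsum_icc hw_smooth hj hv hbd j le_rfl x hx
  rw [h1, h2]
  -- final summation bound
  have hhs : HasSum (fun a : ℕ => (ε * (Cg ⟨j, hj⟩ + Cr ⟨j, hj⟩) * K) * (1 / ((a:ℝ)+1)^2))
      ((ε * (Cg ⟨j, hj⟩ + Cr ⟨j, hj⟩) * K) * T) := summable_inv_sq.hasSum.mul_left _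
  have hper : ∀ a : ℕ, ‖iteratedDerivWithin j (w a) (Set.Icc (0:ℝ) 1) x‖
      ≤ (ε * (Cg ⟨j, hj⟩ + Cr ⟨j, hj⟩) * K) * (1 / ((a:ℝ)+1)^2) := by
    intro a
    rw [Real.norm_eq_abs]
    have := hwbd j hj a x hx
    calc |iteratedDerivWithin j (w a) (Set.Icc (0:ℝ) 1) x|
        ≤ ε * ((Cg ⟨j, hj⟩ + Cr ⟨j, hj⟩) * (1 / ((a:ℝ)+1)^2) * K) := this
      _ = (ε * (Cg ⟨j, hj⟩ + Cr ⟨j, hj⟩) * K) * (1 / ((a:ℝ)+1)^2) := by ring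
  have h3 : ‖∑' a, iteratedDerivWithin j (w a) (Set.Icc (0:ℝ) 1) x‖
      ≤ (ε * (Cg ⟨j, hj⟩ + Cr ⟨j, hj⟩) * K) * T := tsum_of_norm_bounded hhs hper
  rw [Real.norm_eq_abs] at h3
  refine h3.trans ?_
  have h5 : (Cg ⟨j, hj⟩ + Cr ⟨j, hj⟩) * T ≤ ∑ i : Fin l, (Cg i + Cr i) * T :=
    Finset.single_le_sum (f := fun i : Fin l => (Cg i + Cr i) * T)
      (fun i _ => mul_nonneg (by linarith [hCg0 i, hCr0 i]) hT0) (Finset.mem_univ (⟨j, hj⟩ : Fin l))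
  have h6 : (Cg ⟨j, hj⟩ + Cr ⟨j, hj⟩) * T ≤ 2 * M := by
    rw [hM]; linarith
  calc ε * (Cg ⟨j, hj⟩ + Cr ⟨j, hj⟩) * K * T
      = ((Cg ⟨j, hj⟩ + Cr ⟨j, hj⟩) * T) * (ε * K) := by ring
    _ ≤ (2 * M) * (ε * K) := mul_le_mul_of_nonneg_right h6 (mul_nonneg hε.1 hK0)
    _ = 2 * ε * M * K := by ring

lemma iterzero (n : ℕ) {x : ℝ} (hx : x ∈ Set.Icc (0:ℝ) 1) :
    iteratedDerivWithin n (fun _ : ℝ => (0:ℝ)) (Set.Icc (0:ℝ) 1) x = 0 := by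
  rw [iteratedDerivWithin_eq_iteratedFDerivWithin,
    iteratedFDerivWithin_zero_fun]
  simp


/-- **Keller–Liverani perturbation estimate**: there is `M > 0` with
`‖(L_ε - L₀) f‖_{C^{l-1}} ≤ 2 ε M ‖f‖_{C^{l-1}}` for all `ε ∈ [0,1]` and
`f ∈ C^l([0,1])`; in particular the operator norm of `L_ε - L₀` from
`C^l([0,1])` to `C^{l-1}([0,1])` tends to `0` as `ε → 0`. -/
theorem stmt12 (l : ℕ) (hl : 1 ≤ l) :
    ∃ M : ℝ, 0 < M ∧
      (∀ ε ∈ Set.Icc (0 : ℝ) 1, ∀ f : ℝ → ℝ, ContDiffOn ℝ l f (Set.Icc (0 : ℝ) 1) →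
        (⨆ j : Fin l, ⨆ x : Set.Icc (0 : ℝ) 1,
            |iteratedDerivWithin j (fun y => annealedOp ε f y - gaussOp f y)
              (Set.Icc (0 : ℝ) 1) x|) ≤
          2 * ε * M * ⨆ j : Fin l, ⨆ x : Set.Icc (0 : ℝ) 1,
            |iteratedDerivWithin j f (Set.Icc (0 : ℝ) 1) x|) ∧
      Tendsto (fun ε : ℝ =>
          ⨆ f : {f : ℝ → ℝ // ContDiffOn ℝ l f (Set.Icc (0 : ℝ) 1) ∧
              (⨆ j : Fin (l + 1), ⨆ x : Set.Icc (0 : ℝ) 1,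
                |iteratedDerivWithin j f (Set.Icc (0 : ℝ) 1) x|) ≤ 1},
            ⨆ j : Fin l, ⨆ x : Set.Icc (0 : ℝ) 1,
              |iteratedDerivWithin j (fun y => annealedOp ε f.1 y - gaussOp f.1 y)
                (Set.Icc (0 : ℝ) 1) x|)
        (𝓝[≥] 0) (𝓝 0) := by
  obtain ⟨M, hM, hest⟩ := main_est l hl
  haveI hne1 : Nonempty (Fin l) := ⟨⟨0, by omega⟩⟩
  haveI hne2 : Nonempty (Set.Icc (0:ℝ) 1) := ⟨⟨0, by norm_num⟩⟩
  haveI hne3 : Nonempty {f : ℝ → ℝ // ContDiffOn ℝ l f (Set.Icc (0 : ℝ) 1) ∧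
      (⨆ j : Fin (l + 1), ⨆ x : Set.Icc (0 : ℝ) 1,
        |iteratedDerivWithin j f (Set.Icc (0 : ℝ) 1) x|) ≤ 1} := by
    refine ⟨⟨fun _ => 0, contDiffOn_const, ?_⟩⟩
    refine ciSup_le (fun j => ciSup_le (fun x => ?_))
    rw [iterzero _ x.2]
    norm_num
  refine ⟨M, hM, ?_, ?_⟩
  · intro ε hε f hf
    exact ciSup_le (fun j => ciSup_le (fun x => hest ε hε f hf j j.2 x x.2))
  · apply tendsto_of_tendsto_of_tendsto_of_le_of_le' (g := fun _ : ℝ => (0:ℝ))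
      (h := fun ε : ℝ => 2 * ε * M) tendsto_const_nhds
    · exact (((continuous_const.mul continuous_id).mul continuous_const).tendsto'
        0 0 (by simp)).mono_left nhdsWithin_le_nhds
    · exact Eventually.of_forall (fun ε => Real.iSup_nonneg (fun fs =>
        Real.iSup_nonneg (fun j => Real.iSup_nonneg (fun x => abs_nonneg _))))
    · filter_upwards [Icc_mem_nhdsGE zero_lt_one] with ε hε
      refine ciSup_le (fun fs => ?_)
      obtain ⟨hfs_cd, hfs_norm⟩ := fs.2
      have hKle : (⨆ j : Fin l, ⨆ x : Set.Icc (0:ℝ) 1,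
          |iteratedDerivWithin j fs.1 (Set.Icc (0:ℝ) 1) x|) ≤ 1 := by
        refine le_trans (ciSup_le (fun i => ?_)) hfs_norm
        have hco : ((Fin.castSucc i : Fin (l+1)) : ℕ) = (i : ℕ) := rfl
        have := le_ciSup (f := fun j : Fin (l+1) => ⨆ x : Set.Icc (0:ℝ) 1,
          |iteratedDerivWithin (j : ℕ) fs.1 (Set.Icc (0:ℝ) 1) x|)
          (Set.finite_range _).bddAbove (Fin.castSucc i)
        rwa [hco] at this
      refine ciSup_le (fun j => ciSup_le (fun x => ?_))
      refine (hest ε hε fs.1 hfs_cd j j.2 x x.2).trans ?_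
      calc 2 * ε * M * (⨆ j : Fin l, ⨆ x : Set.Icc (0:ℝ) 1,
            |iteratedDerivWithin j fs.1 (Set.Icc (0:ℝ) 1) x|)
          ≤ 2 * ε * M * 1 := by
            apply mul_le_mul_of_nonneg_left hKle
            have := hε.1
            positivity
        _ = 2 * ε * M := mul_one _
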